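/- For all integers q ≥ 2, c ≥ 1, d ≥ 1, every integer n ≥ 1 with d dividing cn, every integer 0 ≤ l ≤ n, and every x̂ ∈ (0,1): C(n,l) · coef(g_{q,d}^{(cn/d)}(x), x^{cl}) / ( C(cn,cl) · (q−1)^{(c−1)l} ) ≤ exp( n·[ H_q(l/n) + (c/d)·( δ_{q,d}(l/n, x̂) − ln q ) ] + c·n·β_{cn}(cl) ). -/

import Mathlib

open Real Set Filter Polynomial
open scoped Classical

private lemma exp_nat_mul_log {t : ℝ} (ht : 0 < t) (k : ℕ) :
    Real.exp ((k : ℝ) * Real.log t) = t ^ k := by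
  rw [Real.exp_nat_mul, Real.exp_log ht]

private lemma exp_log_one_div_mul_pow {t : ℝ} {k : ℕ} (h : 0 < t ∨ k = 0) :
    Real.exp ((k : ℝ) * Real.log (1 / t)) * t ^ k = 1 := by
  rcases h with ht | rfl
  · rw [exp_nat_mul_log (by positivity), ← mul_pow, one_div, inv_mul_cancel₀ ht.ne', one_pow]
  · simp

private lemma log_helper {t s : ℝ} (hs : s ≠ 0) :
    t * Real.log (1 / t) + t * Real.log (t / s) = -(t * Real.log s) := by
  rcases eq_or_ne t 0 with rfl | ht
  · simp
  · rw [one_div, Real.log_inv, Real.log_div ht hs]; ring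

private lemma coeff_binom {a : ℝ} (ha : a ≠ 0) (d k : ℕ) :
    ((Polynomial.C 1 + Polynomial.C a * Polynomial.X : Polynomial ℝ) ^ d).coeff k
      = (d.choose k : ℝ) * a ^ k := by
  have h : (Polynomial.C 1 + Polynomial.C a * Polynomial.X : Polynomial ℝ)
      = Polynomial.C a * (Polynomial.X + Polynomial.C a⁻¹) := by
    rw [mul_add, ← Polynomial.C_mul, mul_inv_cancel₀ ha]; ring
  rw [h, mul_pow, ← Polynomial.C_pow, Polynomial.coeff_C_mul, Polynomial.coeff_X_add_C_pow]
  rcases le_or_gt k d with hkd | hkd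
  · have : a ^ d * (a⁻¹ ^ (d - k)) = a ^ k := by
      rw [inv_pow, ← div_eq_mul_inv, div_eq_iff (pow_ne_zero _ ha), ← pow_add]
      congr 1; omega
    rw [← mul_assoc, this]; ring
  · rw [Nat.choose_eq_zero_of_lt hkd]; simp

private lemma coeff_P (a : ℝ) (ha : a ≠ 0) (d k : ℕ) :
    (((Polynomial.C 1 + Polynomial.C a * Polynomial.X) ^ d +
      Polynomial.C a * (Polynomial.C 1 - Polynomial.X) ^ d : Polynomial ℝ)).coeff k
      = (d.choose k : ℝ) * (a ^ k + a * (-1) ^ k) := by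
  have h2 : (Polynomial.C 1 - Polynomial.X : Polynomial ℝ)
      = Polynomial.C 1 + Polynomial.C (-1 : ℝ) * Polynomial.X := by
    rw [Polynomial.C_neg, Polynomial.C_1]; ring
  rw [Polynomial.coeff_add, coeff_binom ha, Polynomial.coeff_C_mul, h2,
    coeff_binom (by norm_num : (-1 : ℝ) ≠ 0)]
  ring

private lemma coeff_pow_nonneg {p : Polynomial ℝ} (hp : ∀ i, 0 ≤ p.coeff i) (n : ℕ) :
    ∀ i, 0 ≤ (p ^ n).coeff i := by
  induction n with
  | zero => intro i; rw [pow_zero, Polynomial.coeff_one]; split <;> norm_num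
  | succ n ih =>
    intro i
    rw [pow_succ, Polynomial.coeff_mul]
    exact Finset.sum_nonneg fun x _ => mul_nonneg (ih _) (hp _)

private lemma coeff_le_eval {p : Polynomial ℝ} (hp : ∀ i, 0 ≤ p.coeff i) {y : ℝ} (hy : 0 ≤ y)
    (m : ℕ) : p.coeff m * y ^ m ≤ p.eval y := by
  rw [Polynomial.eval_eq_sum_range]
  by_cases hm : m < p.natDegree + 1
  · exact Finset.single_le_sum
      (fun i _ => mul_nonneg (hp i) (pow_nonneg hy i)) (Finset.mem_range.2 hm)
  · rw [Polynomial.coeff_eq_zero_of_natDegree_lt (by omega), zero_mul]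
    exact Finset.sum_nonneg fun i _ => mul_nonneg (hp i) (pow_nonneg hy i)

private lemma choose_mul_pow_le {n l : ℕ} (hl : l ≤ n) {x : ℝ} (hx0 : 0 ≤ x) (hx1 : x ≤ 1) :
    (n.choose l : ℝ) * (x ^ l * (1 - x) ^ (n - l)) ≤ 1 := by
  have h := add_pow x (1 - x) n
  rw [add_sub_cancel, one_pow] at h
  calc (n.choose l : ℝ) * (x ^ l * (1 - x) ^ (n - l))
      = x ^ l * (1 - x) ^ (n - l) * (n.choose l : ℝ) := by ring
    _ ≤ ∑ k ∈ Finset.range (n + 1), x ^ k * (1 - x) ^ (n - k) * (n.choose k : ℝ) := by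
        apply Finset.single_le_sum (f := fun k => x ^ k * (1 - x) ^ (n - k) * (n.choose k : ℝ))
        · intro i _
          have : (0:ℝ) ≤ 1 - x := by linarith
          positivity
        · exact Finset.mem_range.2 (by omega)
    _ = 1 := h.symm


/-- The entropy function `H_q`. -/
noncomputable def Hent (q : ℕ) (x : ℝ) : ℝ :=
  x * Real.log (1 / x) + (1 - x) * Real.log (1 / (1 - x)) + x * Real.log ((q : ℝ) - 1)

/-- The information divergence function `D(x‖y)`. -/
noncomputable def Dkl (x y : ℝ) : ℝ :=
  x * Real.log (x / y) + (1 - x) * Real.log ((1 - x) / (1 - y))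

/-- The function `ρ_{q,d}`. -/
noncomputable def rhoF (q d : ℕ) (x : ℝ) : ℝ :=
  Real.log (1 + ((q : ℝ) - 1) * (1 - (q : ℝ) * x / ((q : ℝ) - 1)) ^ d)

/-- The function `δ_{q,d}(x, x̂)`. -/
noncomputable def deltaTwo (q d : ℕ) (x xh : ℝ) : ℝ :=
  (d : ℝ) * Dkl x xh + rhoF q d xh

/-- The function `δ_{q,d}(x) = inf_{x̂ ∈ (0,1)} δ_{q,d}(x, x̂)`. -/
noncomputable def deltaMin (q d : ℕ) (x : ℝ) : ℝ :=
  sInf ((fun xh => deltaTwo q d x xh) '' Set.Ioo 0 1)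

/-- The asymptotic growth rate `ω_{q,c,d}`. -/
noncomputable def omegaF (q c d : ℕ) (x : ℝ) : ℝ :=
  Hent q x + ((c : ℝ) / (d : ℝ)) * (deltaMin q d x - Real.log (q : ℝ))

/-- The polynomial `g_{q,d}^{(n)}(x) = q^{-n}·([1+(q−1)x]^d + (q−1)(1−x)^d)^n`. -/
noncomputable def gPoly (q d n : ℕ) : Polynomial ℝ :=
  Polynomial.C (((q : ℝ) ^ n)⁻¹) *
    ((Polynomial.C 1 + Polynomial.C ((q : ℝ) - 1) * Polynomial.X) ^ d +
      Polynomial.C ((q : ℝ) - 1) * (Polynomial.C 1 - Polynomial.X) ^ d) ^ n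

/-- The function `β_n(l) = H_2(l/n) − (1/n)·ln C(n,l)`. -/
noncomputable def betaFn (n l : ℕ) : ℝ :=
  Hent 2 ((l : ℝ) / (n : ℝ)) - (1 / (n : ℝ)) * Real.log ((n.choose l : ℝ))

/-- The exact average weight distribution formula is bounded above by
`exp(n·[H_q(l/n) + (c/d)(δ_{q,d}(l/n,x̂) − ln q)] + c·n·β_{cn}(cl))` for every `x̂ ∈ (0,1)`. -/
theorem average_weight_distribution_upper_bound
    (q c d n l : ℕ) (hq : 2 ≤ q) (hc : 1 ≤ c) (hd : 1 ≤ d) (hn : 1 ≤ n)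
    (hdvd : d ∣ c * n) (hl : l ≤ n) (xh : ℝ) (hxh : xh ∈ Set.Ioo (0 : ℝ) 1) :
    (n.choose l : ℝ) * (gPoly q d (c * n / d)).coeff (c * l) /
        (((c * n).choose (c * l) : ℝ) * ((q : ℝ) - 1) ^ ((c - 1) * l)) ≤
      Real.exp ((n : ℝ) * (Hent q ((l : ℝ) / (n : ℝ)) +
          ((c : ℝ) / (d : ℝ)) * (deltaTwo q d ((l : ℝ) / (n : ℝ)) xh - Real.log (q : ℝ))) +
        (c : ℝ) * (n : ℝ) * betaFn (c * n) (c * l)) := by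
  obtain ⟨hxh0, hxh1⟩ := hxh
  have h1xh : (0:ℝ) < 1 - xh := by linarith
  set a := (q:ℝ) - 1 with ha_def
  have hq2 : (2:ℝ) ≤ (q:ℝ) := by exact_mod_cast hq
  have ha1 : 1 ≤ a := by rw [ha_def]; linarith
  have hapos : 0 < a := by linarith
  have ha0 : a ≠ 0 := hapos.ne'
  have hqpos : (0:ℝ) < (q:ℝ) := by linarith
  have hqa : (q:ℝ) = a + 1 := by rw [ha_def]; ring
  set N := c * n / d with hN_def
  have hNd : N * d = c * n := Nat.div_mul_cancel hdvd
  have hn0 : (0:ℝ) < (n:ℝ) := by exact_mod_cast hn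
  have hnne : (n:ℝ) ≠ 0 := hn0.ne'
  have hd0 : (0:ℝ) < (d:ℝ) := by exact_mod_cast hd
  have hc0 : (0:ℝ) < (c:ℝ) := by exact_mod_cast hc
  set x := (l:ℝ) / (n:ℝ) with hx_def
  have hx0 : 0 ≤ x := by rw [hx_def]; positivity
  have hx1 : x ≤ 1 := by
    rw [hx_def, div_le_one hn0]; exact_mod_cast hl
  set y := xh / (a * (1 - xh)) with hy_def
  have hypos : 0 < y := by rw [hy_def]; positivity
  set A := 1 + a * (1 - (q:ℝ) * xh / a) ^ d with hA_def
  have hmM : c * l ≤ c * n := Nat.mul_le_mul_left c hl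
  have hC1 : (0:ℝ) < (((c*n).choose (c*l)) : ℝ) := by
    exact_mod_cast Nat.choose_pos hmM
  -- coefficients of the base polynomial are nonnegative
  have hPc : ∀ i, 0 ≤ (((Polynomial.C 1 + Polynomial.C a * Polynomial.X) ^ d +
      Polynomial.C a * (Polynomial.C 1 - Polynomial.X) ^ d : Polynomial ℝ)).coeff i := by
    intro i
    rw [coeff_P a ha0]
    have hbase : 0 ≤ a ^ i + a * (-1) ^ i := by
      rcases Nat.even_or_odd i with hi | hi
      · rw [hi.neg_one_pow]
        have : 0 ≤ a ^ i := by positivity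
        linarith
      · rw [hi.neg_one_pow]
        have : a ≤ a ^ i := le_self_pow₀ ha1 (by rintro rfl; simp at hi)
        nlinarith
    positivity
  have hgc : ∀ i, 0 ≤ (gPoly q d N).coeff i := by
    intro i
    rw [gPoly, Polynomial.coeff_C_mul, ← ha_def]
    exact mul_nonneg (by positivity) (coeff_pow_nonneg hPc N i)
  -- evaluation of the base polynomial
  have hevalP : Polynomial.eval y (((Polynomial.C 1 + Polynomial.C a * Polynomial.X) ^ d +
      Polynomial.C a * (Polynomial.C 1 - Polynomial.X) ^ d : Polynomial ℝ))
      = (1 + a * y) ^ d + a * (1 - y) ^ d := by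
    simp
  have hFy_ge : (q:ℝ) ≤ (1 + a * y) ^ d + a * (1 - y) ^ d := by
    have h := coeff_le_eval hPc hypos.le 0
    rw [hevalP, coeff_P a ha0] at h
    simp at h
    rw [hqa]
    linarith
  have hF : (1 + a * y) ^ d + a * (1 - y) ^ d = A / (1 - xh) ^ d := by
    have h1 : 1 + a * y = 1 / (1 - xh) := by
      rw [hy_def, eq_div_iff h1xh.ne']; field_simp; ring
    have h2 : 1 - y = (a - (q:ℝ) * xh) / (a * (1 - xh)) := by
      rw [hy_def, hqa, eq_div_iff (mul_pos hapos h1xh).ne']; field_simp; ring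
    have h3 : 1 - (q:ℝ) * xh / a = (a - (q:ℝ) * xh) / a := by
      field_simp
    rw [h1, h2, hA_def, h3, div_pow, div_pow, mul_pow]
    field_simp
    rw [div_pow]; field_simp; rw [one_pow, one_mul]
  have hApos : 0 < A := by
    have hA2 : A = ((1 + a * y) ^ d + a * (1 - y) ^ d) * (1 - xh) ^ d := by
      rw [hF]; field_simp
    rw [hA2]
    exact mul_pos (lt_of_lt_of_le hqpos hFy_ge) (pow_pos h1xh d)
  have hrho : rhoF q d xh = Real.log A := by
    rw [rhoF, ← ha_def, ← hA_def]
  have heval : (gPoly q d N).eval y = ((q:ℝ) ^ N)⁻¹ * (A ^ N / (1 - xh) ^ (c * n)) := by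
    have h0 : (gPoly q d N).eval y
        = ((q:ℝ) ^ N)⁻¹ * ((1 + a * y) ^ d + a * (1 - y) ^ d) ^ N := by
      rw [gPoly, ← ha_def]
      simp
    rw [h0, hF, div_pow, ← pow_mul]
    have : d * N = c * n := by rw [Nat.mul_comm]; exact hNd
    rw [this]
  -- cast identities
  have h1 : (n:ℝ) * x = (l:ℝ) := by rw [hx_def]; field_simp
  have h2 : (n:ℝ) * (1 - x) = ((n - l : ℕ):ℝ) := by
    rw [Nat.cast_sub hl, hx_def]; field_simp
  have h3 : ((c*n : ℕ):ℝ) * x = ((c*l : ℕ):ℝ) := by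
    rw [hx_def]; push_cast; field_simp
  have h4 : ((c*n : ℕ):ℝ) * (1 - x) = ((c*n - c*l : ℕ):ℝ) := by
    rw [Nat.cast_sub hmM, hx_def]; push_cast; field_simp
  have hNdR : (N:ℝ) * (d:ℝ) = ((c*n : ℕ):ℝ) := by exact_mod_cast congrArg (Nat.cast (R := ℝ)) hNd
  have h5 : (n:ℝ) * ((c:ℝ)/(d:ℝ)) = (N:ℝ) := by
    rw [eq_comm, ← mul_div_assoc, eq_div_iff hd0.ne']
    push_cast at hNdR ⊢
    linarith [hNdR]
  have h6 : (N:ℝ) * (d:ℝ) = ((c*n : ℕ):ℝ) := hNdR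
  have hc1 : x * Real.log (1/x) + x * Real.log (x/xh) = -(x * Real.log xh) :=
    log_helper hxh0.ne'
  have hc2 : (1-x) * Real.log (1/(1-x)) + (1-x) * Real.log ((1-x)/(1-xh))
      = -((1-x) * Real.log (1-xh)) := log_helper h1xh.ne'
  have hbeta : (c:ℝ) * (n:ℝ) * betaFn (c*n) (c*l)
      = ((c*n : ℕ):ℝ) * Hent 2 x - Real.log (((c*n).choose (c*l) : ℝ)) := by
    rw [betaFn]
    have harg : ((c*l : ℕ):ℝ) / ((c*n : ℕ):ℝ) = x := by
      rw [hx_def]; push_cast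
      rw [mul_div_mul_left _ _ hc0.ne']
    rw [harg]
    have hMr : ((c*n : ℕ):ℝ) = (c:ℝ) * (n:ℝ) := by push_cast; ring
    rw [hMr]
    field_simp
  set E5 := (l:ℝ) * Real.log (1/x) + ((n - l : ℕ):ℝ) * Real.log (1/(1-x))
      + (l:ℝ) * Real.log a + (-(((c*l : ℕ):ℝ) * Real.log xh))
      + (-(((c*n - c*l : ℕ):ℝ) * Real.log (1-xh)))
      + (N:ℝ) * Real.log A + (-((N:ℝ) * Real.log (q:ℝ))) with hE5_def
  have hExp : (n:ℝ) * (Hent q x +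
        ((c:ℝ)/(d:ℝ)) * (deltaTwo q d x xh - Real.log (q:ℝ)))
      + (c:ℝ) * (n:ℝ) * betaFn (c*n) (c*l)
      = E5 - Real.log (((c*n).choose (c*l) : ℝ)) := by
    rw [hbeta, hE5_def]
    simp only [Hent, deltaTwo, Dkl, hrho, ← ha_def]
    have h21 : ((2:ℕ):ℝ) - 1 = 1 := by norm_num
    rw [h21, Real.log_one]
    linear_combination (Real.log (1/x) + Real.log a) * h1 + Real.log (1/(1-x)) * h2
      - Real.log xh * h3 - Real.log (1-xh) * h4
      + ((d:ℝ) * (x * Real.log (x/xh) + (1-x) * Real.log ((1-x)/(1-xh)))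
          + Real.log A - Real.log (q:ℝ)) * h5
      + (x * Real.log (x/xh) + (1-x) * Real.log ((1-x)/(1-xh))) * h6
      + ((c*n : ℕ):ℝ) * hc1 + ((c*n : ℕ):ℝ) * hc2
  -- exponential values
  have he1 : Real.exp ((l:ℝ) * Real.log (1/x)) * x ^ l = 1 := by
    apply exp_log_one_div_mul_pow
    rcases Nat.eq_zero_or_pos l with h | h
    · right; exact h
    · left; rw [hx_def]; apply div_pos _ hn0; exact_mod_cast h
  have he2 : Real.exp (((n - l : ℕ):ℝ) * Real.log (1/(1-x))) * (1-x) ^ (n-l) = 1 := by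
    apply exp_log_one_div_mul_pow
    rcases Nat.lt_or_ge l n with h | h
    · left
      have : x < 1 := by rw [hx_def, div_lt_one hn0]; exact_mod_cast h
      linarith
    · right; omega
  have he3 : Real.exp ((l:ℝ) * Real.log a) = a ^ l := exp_nat_mul_log hapos l
  have he4 : Real.exp (-(((c*l : ℕ):ℝ) * Real.log xh)) = (xh ^ (c*l))⁻¹ := by
    rw [Real.exp_neg, exp_nat_mul_log hxh0]
  have he5 : Real.exp (-(((c*n - c*l : ℕ):ℝ) * Real.log (1-xh)))
      = ((1-xh) ^ (c*n - c*l))⁻¹ := by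
    rw [Real.exp_neg, exp_nat_mul_log h1xh]
  have he6 : Real.exp ((N:ℝ) * Real.log A) = A ^ N := exp_nat_mul_log hApos N
  have he7 : Real.exp (-((N:ℝ) * Real.log (q:ℝ))) = ((q:ℝ) ^ N)⁻¹ := by
    rw [Real.exp_neg, exp_nat_mul_log hqpos]
  have hmid : a ^ l * a ^ ((c-1)*l) * y ^ (c*l) * (xh ^ (c*l))⁻¹
      * ((1-xh) ^ (c*n - c*l))⁻¹ = ((1-xh) ^ (c*n))⁻¹ := by
    have hae : a ^ l * a ^ ((c-1)*l) = a ^ (c*l) := by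
      rw [← pow_add]
      congr 1
      obtain ⟨c', rfl⟩ : ∃ c', c = c' + 1 := ⟨c - 1, by omega⟩
      simp [Nat.add_sub_cancel]
      ring
    rw [hy_def, div_pow, mul_pow, hae]
    have hpow : (1-xh) ^ (c*n - c*l) * (1-xh) ^ (c*l) = (1-xh) ^ (c*n) := by
      rw [← pow_add, Nat.sub_add_cancel hmM]
    field_simp
    rw [← hpow]
    ring
  have hkey : Real.exp E5 * (a ^ ((c-1)*l) * (x ^ l * ((1-x) ^ (n-l) * y ^ (c*l))))
      = (gPoly q d N).eval y := by
    rw [hE5_def, Real.exp_add, Real.exp_add, Real.exp_add, Real.exp_add, Real.exp_add,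
      Real.exp_add, he3, he4, he5, he6, he7, heval]
    calc Real.exp ((l:ℝ) * Real.log (1/x)) * Real.exp (((n - l : ℕ):ℝ) * Real.log (1/(1-x)))
          * a ^ l * (xh ^ (c*l))⁻¹ * ((1-xh) ^ (c*n - c*l))⁻¹ * A ^ N * ((q:ℝ) ^ N)⁻¹
          * (a ^ ((c-1)*l) * (x ^ l * ((1-x) ^ (n-l) * y ^ (c*l))))
        = (Real.exp ((l:ℝ) * Real.log (1/x)) * x ^ l)
          * (Real.exp (((n - l : ℕ):ℝ) * Real.log (1/(1-x))) * (1-x) ^ (n-l))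
          * (a ^ l * a ^ ((c-1)*l) * y ^ (c*l) * (xh ^ (c*l))⁻¹ * ((1-xh) ^ (c*n - c*l))⁻¹)
          * (A ^ N * ((q:ℝ) ^ N)⁻¹) := by ring
      _ = 1 * 1 * ((1-xh) ^ (c*n))⁻¹ * (A ^ N * ((q:ℝ) ^ N)⁻¹) := by
          rw [he1, he2, hmid]
      _ = ((q:ℝ) ^ N)⁻¹ * (A ^ N / (1-xh) ^ (c*n)) := by ring
  -- the two probabilistic bounds
  have hBin : (n.choose l : ℝ) * (x ^ l * (1-x) ^ (n-l)) ≤ 1 :=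
    choose_mul_pow_le hl hx0 hx1
  have hGy : (gPoly q d N).coeff (c*l) * y ^ (c*l) ≤ (gPoly q d N).eval y :=
    coeff_le_eval hgc hypos.le (c*l)
  have hG0 : 0 ≤ (gPoly q d N).coeff (c*l) := hgc (c*l)
  have hxl : 0 < x ^ l := by
    rcases Nat.eq_zero_or_pos l with h | h
    · simp [h]
    · apply pow_pos; rw [hx_def]; apply div_pos _ hn0; exact_mod_cast h
  have h1xl : 0 < (1-x) ^ (n-l) := by
    rcases Nat.lt_or_ge l n with h | h
    · apply pow_pos
      have : x < 1 := by rw [hx_def, div_lt_one hn0]; exact_mod_cast h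
      linarith
    · have : n - l = 0 := by omega
      simp [this]
  have hw : 0 < x ^ l * ((1-x) ^ (n-l) * y ^ (c*l)) := by positivity
  have main : (n.choose l : ℝ) * (gPoly q d N).coeff (c*l)
      ≤ Real.exp E5 * a ^ ((c-1)*l) := by
    have hchain : ((n.choose l : ℝ) * (gPoly q d N).coeff (c*l))
          * (x ^ l * ((1-x) ^ (n-l) * y ^ (c*l)))
        ≤ (Real.exp E5 * a ^ ((c-1)*l)) * (x ^ l * ((1-x) ^ (n-l) * y ^ (c*l))) := by
      calc ((n.choose l : ℝ) * (gPoly q d N).coeff (c*l))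
            * (x ^ l * ((1-x) ^ (n-l) * y ^ (c*l)))
          = ((n.choose l : ℝ) * (x ^ l * (1-x) ^ (n-l)))
            * ((gPoly q d N).coeff (c*l) * y ^ (c*l)) := by ring
        _ ≤ 1 * ((gPoly q d N).eval y) := by
            apply mul_le_mul hBin hGy (mul_nonneg hG0 (by positivity)) zero_le_one
        _ = (Real.exp E5 * a ^ ((c-1)*l)) * (x ^ l * ((1-x) ^ (n-l) * y ^ (c*l))) := by
            rw [one_mul, ← hkey]; ring
    exact le_of_mul_le_mul_right hchain hw
  calc (n.choose l : ℝ) * (gPoly q d N).coeff (c*l)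
        / ((((c*n).choose (c*l)) : ℝ) * a ^ ((c-1)*l))
      ≤ (Real.exp E5 * a ^ ((c-1)*l)) / ((((c*n).choose (c*l)) : ℝ) * a ^ ((c-1)*l)) := by
        exact (div_le_div_iff_of_pos_right (by positivity)).2 main
    _ = Real.exp E5 / (((c*n).choose (c*l)) : ℝ) := by
        rw [mul_div_mul_right _ _ (pow_ne_zero _ ha0)]
    _ = Real.exp ((n:ℝ) * (Hent q x +
          ((c:ℝ)/(d:ℝ)) * (deltaTwo q d x xh - Real.log (q:ℝ)))
        + (c:ℝ) * (n:ℝ) * betaFn (c*n) (c*l)) := by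
        rw [hExp, Real.exp_sub, Real.exp_log hC1]
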